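/- arXiv:2312.15376 — 4 statements merged into one kernel-verified Lean document; each statement's English description precedes it below -/
import Mathlib

section
/- Let L₁, L₂ be lower triangular m×m real matrices with positive diagonal entries. Define γ(a) := ⌊L₁⌋ + a(⌊L₂⌋ − ⌊L₁⌋) + exp(log D(L₁) + a(log D(L₂) − log D(L₁))) for a ∈ [0,1], where ⌊L⌋ is the strictly lower-triangular part, D(L) the diagonal part, and log/exp act entrywise on diagonals. Then γ(a) is lower triangular with positive diagonal for every a ∈ [0,1], γ(0) = L₁, γ(1) = L₂, and d(γ(a), γ(b)) = |b − a| · d(L₁, L₂) for all a, b ∈ [0,1], where d(A,B)² := ‖⌊A⌋ − ⌊B⌋‖_F² + ‖log D(A) − log D(B)‖_F². -/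
/-- `L` is lower triangular with positive diagonal. -/
def LowerPos {m : ℕ} (L : Matrix (Fin m) (Fin m) ℝ) : Prop :=
  (∀ i j, i < j → L i j = 0) ∧ (∀ i, 0 < L i i)

/-- Log-Cholesky metric:
`d(A,B)² = ‖⌊A⌋−⌊B⌋‖_F² + ‖log D(A) − log D(B)‖_F²`. -/
noncomputable def dLC {m : ℕ} (A B : Matrix (Fin m) (Fin m) ℝ) : ℝ :=
  Real.sqrt (∑ i, ∑ j, (if (j : Fin m) < i then (A i j - B i j) ^ 2 else 0) +
    ∑ i, (Real.log (A i i) - Real.log (B i i)) ^ 2)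

/-- The Log-Cholesky geodesic
`γ(a) = ⌊L₁⌋ + a(⌊L₂⌋−⌊L₁⌋) + exp(log D(L₁) + a(log D(L₂) − log D(L₁)))`. -/
noncomputable def cholGeodesic {m : ℕ} (L₁ L₂ : Matrix (Fin m) (Fin m) ℝ) (a : ℝ) :
    Matrix (Fin m) (Fin m) ℝ := fun i j =>
  if i = j then
    Real.exp (Real.log (L₁ i i) + a * (Real.log (L₂ i i) - Real.log (L₁ i i)))
  else if j < i then L₁ i j + a * (L₂ i j - L₁ i j) else 0

/-- For L₁, L₂ lower triangular with positive diagonal, γ(a) is lower triangular with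
positive diagonal for every a ∈ [0,1], γ(0) = L₁, γ(1) = L₂, and
d(γ(a), γ(b)) = |b − a|·d(L₁, L₂): γ is the constant-speed Log-Cholesky geodesic. -/
theorem cholGeodesic_is_geodesic {m : ℕ} (L₁ L₂ : Matrix (Fin m) (Fin m) ℝ)
    (h₁ : LowerPos L₁) (h₂ : LowerPos L₂) :
    (∀ a ∈ Set.Icc (0 : ℝ) 1, LowerPos (cholGeodesic L₁ L₂ a)) ∧
    cholGeodesic L₁ L₂ 0 = L₁ ∧
    cholGeodesic L₁ L₂ 1 = L₂ ∧
    (∀ a ∈ Set.Icc (0 : ℝ) 1, ∀ b ∈ Set.Icc (0 : ℝ) 1,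
      dLC (cholGeodesic L₁ L₂ a) (cholGeodesic L₁ L₂ b) = |b - a| * dLC L₁ L₂) := by
  obtain ⟨h₁u, h₁d⟩ := h₁
  obtain ⟨h₂u, h₂d⟩ := h₂
  refine ⟨?_, ?_, ?_, ?_⟩
  · intro a _
    constructor
    · intro i j hij
      simp only [cholGeodesic]
      rw [if_neg (by omega), if_neg (by omega)]
    · intro i
      simp only [cholGeodesic, if_pos rfl]
      exact Real.exp_pos _
  · funext i j
    simp only [cholGeodesic]
    by_cases h : i = j
    · subst h
      simp [Real.exp_log (h₁d i)]
    · rw [if_neg h]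
      by_cases h' : j < i
      · simp [h']
      · rw [if_neg h']
        exact (h₁u i j (by omega)).symm
  · funext i j
    simp only [cholGeodesic]
    by_cases h : i = j
    · subst h
      simp [Real.exp_log (h₂d i)]
    · rw [if_neg h]
      by_cases h' : j < i
      · simp only [if_pos h']
        ring
      · rw [if_neg h']
        exact (h₂u i j (by omega)).symm
  · intro a _ b _
    have key : (∑ i, ∑ j, (if (j : Fin m) < i then
          (cholGeodesic L₁ L₂ a i j - cholGeodesic L₁ L₂ b i j) ^ 2 else 0) +
        ∑ i, (Real.log (cholGeodesic L₁ L₂ a i i) -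
          Real.log (cholGeodesic L₁ L₂ b i i)) ^ 2)
        = (b - a) ^ 2 * (∑ i, ∑ j, (if (j : Fin m) < i then (L₁ i j - L₂ i j) ^ 2 else 0) +
          ∑ i, (Real.log (L₁ i i) - Real.log (L₂ i i)) ^ 2) := by
      rw [mul_add, Finset.mul_sum, Finset.mul_sum]
      congr 1
      · refine Finset.sum_congr rfl fun i _ => ?_
        rw [Finset.mul_sum]
        refine Finset.sum_congr rfl fun j _ => ?_
        by_cases h : (j : Fin m) < i
        · rw [if_pos h, if_pos h]
          simp only [cholGeodesic, if_neg (by omega : ¬ i = j), if_pos h]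
          ring
        · simp [h]
      · refine Finset.sum_congr rfl fun i _ => ?_
        have e : ∀ c : ℝ, Real.log (cholGeodesic L₁ L₂ c i i) =
            Real.log (L₁ i i) + c * (Real.log (L₂ i i) - Real.log (L₁ i i)) := by
          intro c
          unfold cholGeodesic
          rw [if_pos rfl, Real.log_exp]
        rw [e, e]
        ring
    simp only [dLC, key]
    rw [Real.sqrt_mul (sq_nonneg _), Real.sqrt_sq_eq_abs]
end

section
/- In the space 𝓛₊ of lower triangular matrices with positive diagonal, the map Υ(M₁, M₂, M₃) := M₄ with ⌊M₄⌋ = ⌊M₃⌋ + (⌊M₂⌋ − ⌊M₁⌋) and D(M₄) = exp(log D(M₃) + log D(M₂) − log D(M₁)) satisfies the ubiquity property: for L₁ ≠ L₂ and any L₃, with L₄ := Υ(L₁, L₂, L₃), one has Υ(L₁, γ_{L₁,L₂}(a), L₃) = γ_{L₃,L₄}(a) for all a ∈ [0,1]. -/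
/-- The ubiquity map on 𝓛₊: `⌊Υ(M₁,M₂,M₃)⌋ = ⌊M₃⌋ + (⌊M₂⌋ − ⌊M₁⌋)` and
`D(Υ(M₁,M₂,M₃)) = exp(log D(M₃) + log D(M₂) − log D(M₁))`. -/
noncomputable def cholUpsilon {m : ℕ} (M₁ M₂ M₃ : Matrix (Fin m) (Fin m) ℝ) :
    Matrix (Fin m) (Fin m) ℝ := fun i j =>
  if i = j then
    Real.exp (Real.log (M₃ i i) + Real.log (M₂ i i) - Real.log (M₁ i i))
  else if j < i then M₃ i j + (M₂ i j - M₁ i j) else 0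

/-- Ubiquity in the Log-Cholesky space: for L₁ ≠ L₂ and any L₃, with
L₄ = Υ(L₁, L₂, L₃), one has Υ(L₁, γ_{L₁,L₂}(a), L₃) = γ_{L₃,L₄}(a) for a ∈ [0,1]. -/
theorem chol_ubiquity {m : ℕ} (L₁ L₂ L₃ : Matrix (Fin m) (Fin m) ℝ)
    (h₁ : LowerPos L₁) (h₂ : LowerPos L₂) (h₃ : LowerPos L₃) (hne : L₁ ≠ L₂) :
    ∀ a ∈ Set.Icc (0 : ℝ) 1,
      cholUpsilon L₁ (cholGeodesic L₁ L₂ a) L₃ =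
        cholGeodesic L₃ (cholUpsilon L₁ L₂ L₃) a := by
  intro a _
  funext i j
  simp only [cholUpsilon, cholGeodesic]
  by_cases hij : i = j
  · simp [hij, Real.log_exp]
    ring_nf
  · simp only [hij, if_false]
    split_ifs with hji
    · ring
    · rfl
end

section
/- The map Υ(M₁, M₂, M₃) on 𝓛₊ defined by ⌊Υ⌋ = ⌊M₃⌋ + ⌊M₂⌋ − ⌊M₁⌋ and D(Υ) = exp(log D(M₃) + log D(M₂) − log D(M₁)) is jointly Lipschitz with respect to the Log-Cholesky metric: d(Υ(M₁,M₂,M₃), Υ(M₁',M₂',M₃')) ≤ d(M₁,M₁') + d(M₂,M₂') + d(M₃,M₃'). -/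
section aux

variable {m : ℕ}

/-- The vector of differences associated to a pair of matrices. -/
noncomputable def lcVec (A B : Matrix (Fin m) (Fin m) ℝ) :
    (Fin m × Fin m) ⊕ Fin m → ℝ :=
  Sum.elim (fun p => if p.2 < p.1 then A p.1 p.2 - B p.1 p.2 else 0)
    (fun i => Real.log (A i i) - Real.log (B i i))

lemma dLC_eq_sqrt (A B : Matrix (Fin m) (Fin m) ℝ) :
    dLC A B = Real.sqrt (∑ x, (lcVec A B x) ^ 2) := by
  unfold dLC lcVec
  congr 1
  rw [Fintype.sum_sum_type, Fintype.sum_prod_type]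
  congr 1
  refine Finset.sum_congr rfl fun i _ => Finset.sum_congr rfl fun j _ => ?_
  by_cases h : j < i <;> simp [h]

lemma sqrt_sum_sq_le {ι : Type*} [Fintype ι] (a b c : ι → ℝ) :
    Real.sqrt (∑ i, (a i + b i + c i) ^ 2) ≤
      Real.sqrt (∑ i, (a i) ^ 2) + Real.sqrt (∑ i, (b i) ^ 2) +
        Real.sqrt (∑ i, (c i) ^ 2) := by
  let A : EuclideanSpace ℝ ι := (WithLp.equiv 2 (ι → ℝ)).symm a
  let B : EuclideanSpace ℝ ι := (WithLp.equiv 2 (ι → ℝ)).symm b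
  let C : EuclideanSpace ℝ ι := (WithLp.equiv 2 (ι → ℝ)).symm c
  have hn : ∀ v : ι → ℝ,
      ‖(WithLp.equiv 2 (ι → ℝ)).symm v‖ = Real.sqrt (∑ i, (v i) ^ 2) := by
    intro v
    rw [EuclideanSpace.norm_eq]
    simp [sq_abs]
  have habc : ‖A + B + C‖ = Real.sqrt (∑ i, (a i + b i + c i) ^ 2) := by
    have : A + B + C = (WithLp.equiv 2 (ι → ℝ)).symm (fun i => a i + b i + c i) := by
      rfl
    rw [this, hn]
  calc Real.sqrt (∑ i, (a i + b i + c i) ^ 2) = ‖A + B + C‖ := habc.symm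
    _ ≤ ‖A‖ + ‖B‖ + ‖C‖ := norm_add₃_le
    _ = _ := by rw [hn, hn, hn]

end aux

/-- The ubiquity map on 𝓛₊ is jointly Lipschitz (constant 1) for the Log-Cholesky
metric: d(Υ(M₁,M₂,M₃), Υ(M₁',M₂',M₃')) ≤ d(M₁,M₁') + d(M₂,M₂') + d(M₃,M₃'). -/
theorem cholUpsilon_lipschitz {m : ℕ} (M₁ M₂ M₃ M₁' M₂' M₃' : Matrix (Fin m) (Fin m) ℝ)
    (h₁ : LowerPos M₁) (h₂ : LowerPos M₂) (h₃ : LowerPos M₃)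
    (h₁' : LowerPos M₁') (h₂' : LowerPos M₂') (h₃' : LowerPos M₃') :
    dLC (cholUpsilon M₁ M₂ M₃) (cholUpsilon M₁' M₂' M₃') ≤
      dLC M₁ M₁' + dLC M₂ M₂' + dLC M₃ M₃' := by
  rw [dLC_eq_sqrt, dLC_eq_sqrt, dLC_eq_sqrt, dLC_eq_sqrt]
  have key : ∀ x, lcVec (cholUpsilon M₁ M₂ M₃) (cholUpsilon M₁' M₂' M₃') x =
      lcVec M₃ M₃' x + lcVec M₂ M₂' x + (-(lcVec M₁ M₁' x)) := by
    rintro (⟨i, j⟩ | i)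
    · by_cases h : j < i
      · have hne : i ≠ j := (ne_of_gt h)
        simp only [lcVec, Sum.elim_inl, cholUpsilon, if_neg hne, if_pos h]
        ring
      · simp [lcVec, h]
    · simp only [lcVec, Sum.elim_inr, cholUpsilon, if_pos rfl, if_true, eq_self_iff_true,
        Real.log_exp]
      ring
  calc Real.sqrt (∑ x, (lcVec (cholUpsilon M₁ M₂ M₃) (cholUpsilon M₁' M₂' M₃') x) ^ 2)
      = Real.sqrt (∑ x, (lcVec M₃ M₃' x + lcVec M₂ M₂' x + (-(lcVec M₁ M₁' x))) ^ 2) := by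
        congr 1; exact Finset.sum_congr rfl fun x _ => by rw [key x]
    _ ≤ Real.sqrt (∑ x, (lcVec M₃ M₃' x) ^ 2) + Real.sqrt (∑ x, (lcVec M₂ M₂' x) ^ 2) +
        Real.sqrt (∑ x, (-(lcVec M₁ M₁' x)) ^ 2) :=
        sqrt_sum_sq_le _ _ _
    _ = _ := by simp only [neg_sq]; ring
end

section
/- Let g₁, g₂, g₃ be unit vectors in a real inner product space with g₂ not a multiple of g₁, θ = arccos⟨g₁,g₂⟩, R the associated planar rotation with Rg₁ = g₂, and g₄ := R(g₃). Then ⟨g₃, g₄⟩ ≥ cos θ; equivalently, the intrinsic distance satisfies d(g₃, g₄) = arccos⟨g₃,g₄⟩ ≤ θ = d(g₁, g₂). -/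
open scoped RealInnerProductSpace

/-- Let g₁, g₂, g₃ be unit vectors with g₂ not a multiple of g₁, θ = arccos⟨g₁,g₂⟩,
R the associated planar rotation (so Rg₁ = g₂), and g₄ = R(g₃). Then ⟨g₃,g₄⟩ ≥ cos θ;
equivalently the intrinsic distance satisfies arccos⟨g₃,g₄⟩ ≤ θ = arccos⟨g₁,g₂⟩. -/
theorem sphere_transport_contraction {H : Type*} [NormedAddCommGroup H]
    [InnerProductSpace ℝ H] (g₁ g₂ g₃ : H)
    (hg₁ : ‖g₁‖ = 1) (hg₂ : ‖g₂‖ = 1) (hg₃ : ‖g₃‖ = 1)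
    (hind : ∀ c : ℝ, g₂ ≠ c • g₁) :
    let θ : ℝ := Real.arccos ⟪g₁, g₂⟫
    let u₁ : H := g₁
    let u₂ : H := ‖g₂ - ⟪g₂, u₁⟫ • u₁‖⁻¹ • (g₂ - ⟪g₂, u₁⟫ • u₁)
    let Q : H → H := fun x => ⟪u₂, x⟫ • u₁ - ⟪u₁, x⟫ • u₂
    let R : H → H := fun x => x + Real.sin θ • Q x + (1 - Real.cos θ) • Q (Q x)
    let g₄ : H := R g₃
    Real.cos θ ≤ ⟪g₃, g₄⟫ ∧ Real.arccos ⟪g₃, g₄⟫ ≤ θ := by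
  intro θ u₁ u₂ Q R g₄
  have hv : g₂ - ⟪g₂, g₁⟫ • g₁ ≠ 0 := by
    intro h
    exact hind ⟪g₂, g₁⟫ (sub_eq_zero.mp h)
  have hnv : ‖g₂ - ⟪g₂, g₁⟫ • g₁‖ ≠ 0 := norm_ne_zero_iff.mpr hv
  have hu1 : ‖u₁‖ = 1 := hg₁
  have hu2 : ‖u₂‖ = 1 := by
    show ‖‖g₂ - ⟪g₂, g₁⟫ • g₁‖⁻¹ • (g₂ - ⟪g₂, g₁⟫ • g₁)‖ = 1
    rw [norm_smul, norm_inv, norm_norm, inv_mul_cancel₀ hnv]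
  have h11 : ⟪u₁, u₁⟫ = 1 := by
    rw [real_inner_self_eq_norm_sq, hu1]; norm_num
  have h22 : ⟪u₂, u₂⟫ = 1 := by
    rw [real_inner_self_eq_norm_sq, hu2]; norm_num
  have h12 : ⟪u₁, u₂⟫ = 0 := by
    show ⟪g₁, ‖g₂ - ⟪g₂, g₁⟫ • g₁‖⁻¹ • (g₂ - ⟪g₂, g₁⟫ • g₁)⟫ = 0
    rw [real_inner_smul_right, inner_sub_right, real_inner_smul_right,
      real_inner_self_eq_norm_sq, hg₁, real_inner_comm g₁ g₂]
    ring
  have h21 : ⟪u₂, u₁⟫ = 0 := by rw [real_inner_comm]; exact h12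
  set a : ℝ := ⟪u₁, g₃⟫ with ha
  set b : ℝ := ⟪u₂, g₃⟫ with hb
  have hca : ⟪g₃, u₁⟫ = a := by rw [real_inner_comm]
  have hcb : ⟪g₃, u₂⟫ = b := by rw [real_inner_comm]
  -- Bessel: a² + b² ≤ 1
  have hbessel : a ^ 2 + b ^ 2 ≤ 1 := by
    have h0 : (0:ℝ) ≤ ⟪g₃ - a • u₁ - b • u₂, g₃ - a • u₁ - b • u₂⟫ :=
      real_inner_self_nonneg
    have hg33 : ⟪g₃, g₃⟫ = 1 := by
      rw [real_inner_self_eq_norm_sq, hg₃]; norm_num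
    simp only [inner_sub_left, inner_sub_right, real_inner_smul_left,
      real_inner_smul_right, h11, h22, h12, h21, hg33,
      hca, hcb] at h0
    nlinarith [h0]
  have hcos : Real.cos θ = ⟪g₁, g₂⟫ := by
    apply Real.cos_arccos
    · have := abs_real_inner_le_norm g₁ g₂
      rw [hg₁, hg₂] at this
      nlinarith [abs_nonneg ⟪g₁, g₂⟫, le_abs_self ⟪g₁, g₂⟫, neg_abs_le ⟪g₁, g₂⟫]
    · have := abs_real_inner_le_norm g₁ g₂
      rw [hg₁, hg₂] at this
      nlinarith [le_abs_self ⟪g₁, g₂⟫]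
  have hcos1 : Real.cos θ ≤ 1 := Real.cos_le_one θ
  -- compute the inner product ⟪g₃, g₄⟫
  have hQ3 : Q g₃ = b • u₁ - a • u₂ := rfl
  have hQQ3 : Q (Q g₃) = -a • u₁ - b • u₂ := by
    show ⟪u₂, Q g₃⟫ • u₁ - ⟪u₁, Q g₃⟫ • u₂ = _
    rw [hQ3]
    simp only [inner_sub_right, real_inner_smul_right, h11, h22, h12, h21]
    module
  have hkey : ⟪g₃, g₄⟫ = 1 - (1 - Real.cos θ) * (a ^ 2 + b ^ 2) := by
    show ⟪g₃, g₃ + Real.sin θ • Q g₃ + (1 - Real.cos θ) • Q (Q g₃)⟫ = _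
    rw [hQ3, hQQ3]
    simp only [inner_add_right, inner_sub_right, real_inner_smul_right,
      hca, hcb]
    have hg33 : ⟪g₃, g₃⟫ = 1 := by
      rw [real_inner_self_eq_norm_sq, hg₃]; norm_num
    rw [hg33]
    ring
  have hineq : Real.cos θ ≤ ⟪g₃, g₄⟫ := by
    rw [hkey]
    nlinarith [sq_nonneg a, sq_nonneg b]
  refine ⟨hineq, ?_⟩
  have hmono : Real.arccos ⟪g₃, g₄⟫ ≤ Real.arccos (Real.cos θ) := by
    simp only [Real.arccos]
    have := Real.monotone_arcsin hineq
    linarith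
  have harc : Real.arccos (Real.cos θ) = θ := by
    rw [hcos]
  linarith [hmono, harc.le, harc.ge]
end
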